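/- Let k ≤ (2r+1)/3 and let G be a (2r+1)-regular multigraph whose vertex set admits a partition into sets R, S, T such that: (a) S and T are independent sets with |T| > |S|; (b) every cut-edge of G joins T to a distinct component of G[R]; (c) every edge incident to S either joins S to T, or joins S to a component of G[R] that is joined to S by exactly one edge and to T by exactly one edge; (d) exactly k(|T|−|S|)−1 components of G[R] are joined to T by exactly three edges each; (e) every remaining component of G[R] is a (2r+1)-regular multigraph with no cut-edge and with no edges to S or T; and (f) if k < (2r+1)/3 then |T| − |S| = 1. Then G has no 2k-factor. -/

import Mathlib

open scoped Classical
noncomputable section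

structure Multigraph (V : Type) (E : Type) where
  inc : E → Sym2 V

namespace Multigraph

variable {V E : Type}

/-- The number of times vertex `v` occurs as an endpoint of the unordered pair `s`
(a loop at `v` counts twice). -/
def endCount (v : V) (s : Sym2 V) : ℕ :=
  Sym2.lift ⟨fun a b => (if a = v then 1 else 0) + (if b = v then 1 else 0),
    fun _ _ => add_comm _ _⟩ s

/-- The degree of a vertex in a multigraph (a loop contributes 2). -/
def degree [Fintype E] (G : Multigraph V E) (v : V) : ℕ :=
  ∑ e : E, endCount v (G.inc e)

/-- `G` has a spanning `ℓ`-regular subgraph (a set of edges giving each vertex degree `ℓ`). -/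
def HasFactor [Fintype E] (G : Multigraph V E) (ℓ : ℕ) : Prop :=
  ∃ F : Finset E, ∀ v : V, ∑ e ∈ F, endCount v (G.inc e) = ℓ

/-- One step along an edge not in `A`. -/
def Step (G : Multigraph V E) (A : Set E) (x y : V) : Prop :=
  ∃ e : E, e ∉ A ∧ G.inc e = s(x, y)

/-- The number of connected components of `G` after deleting the edges in `A`. -/
def numComponents (G : Multigraph V E) (A : Set E) : ℕ :=
  Nat.card (Quot (G.Step A))

/-- An edge is a cut-edge if deleting it increases the number of components. -/
def IsCutEdge (G : Multigraph V E) (e : E) : Prop :=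
  G.numComponents ∅ < G.numComponents {e}

/-- The number of cut-edges of `G`. -/
def cutEdgeCount (G : Multigraph V E) : ℕ :=
  Nat.card {e : E // G.IsCutEdge e}

/-- `‖A,B‖`: the number of edges with one endpoint in `A` and the other in `B`
(for disjoint `A` and `B`). -/
def edgesBetween (G : Multigraph V E) (A B : Set V) : ℕ :=
  Nat.card {e : E // ∃ a ∈ A, ∃ b ∈ B, G.inc e = s(a, b)}

/-- The degree of `v` in `G − S` (only edges with no endpoint in `S` count). -/
def degreeAvoid [Fintype E] (G : Multigraph V E) (S : Set V) (v : V) : ℕ :=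
  ∑ e : E, if ∀ u ∈ S, ¬ u ∈ G.inc e then endCount v (G.inc e) else 0

/-- `d_{G−S}(T)`: the sum over `v ∈ T` of the degree of `v` in `G − S`. -/
def degSumAvoid [Fintype V] [Fintype E] (G : Multigraph V E) (S T : Set V) : ℕ :=
  ∑ v : V, if v ∈ T then G.degreeAvoid S v else 0

/-- One step inside the vertex set `R`. -/
def StepIn (G : Multigraph V E) (R : Set V) (x y : V) : Prop :=
  x ∈ R ∧ y ∈ R ∧ ∃ e : E, G.inc e = s(x, y)

/-- Reachability within the vertex set `R`. -/
def ReachIn (G : Multigraph V E) (R : Set V) : V → V → Prop :=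
  Relation.ReflTransGen (G.StepIn R)

/-- The component of `v` in the submultigraph induced by `R`. -/
def componentIn (G : Multigraph V E) (R : Set V) (v : V) : Set V :=
  {w | G.ReachIn R v w}

/-- `C` is (the vertex set of) a component of the submultigraph induced by `R`. -/
def IsCompOf (G : Multigraph V E) (R : Set V) (C : Set V) : Prop :=
  ∃ v ∈ R, C = G.componentIn R v

/-- `q(S,T)`: the number of components `Q` of `G − S − T` with `‖V(Q),T‖` odd. -/
def oddComps (G : Multigraph V E) (S T : Set V) : ℕ :=
  Nat.card {C : Set V // G.IsCompOf ((S ∪ T)ᶜ) C ∧ Odd (G.edgesBetween C T)}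

end Multigraph

open Multigraph in
/-- No edge (including loops) has both endpoints in `S`. -/
def Multigraph.IsIndependent {V E : Type} (G : Multigraph V E) (S : Set V) : Prop :=
  ∀ e : E, ∀ a b : V, G.inc e = s(a, b) → ¬(a ∈ S ∧ b ∈ S)


set_option linter.unusedSectionVars false
namespace NF
open Multigraph Finset

variable {V E : Type} [Fintype V] [Fintype E] (G : Multigraph V E)

/-- count of endpoints of `s` lying in `W` (loop in W counts 2). -/
def cw (W : Set V) (s : Sym2 V) : ℕ :=
  Sym2.lift ⟨fun a b => (if a ∈ W then 1 else 0) + (if b ∈ W then 1 else 0),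
    fun _ _ => add_comm _ _⟩ s

@[simp] lemma cw_mk (W : Set V) (a b : V) :
    cw W s(a, b) = (if a ∈ W then 1 else 0) + (if b ∈ W then 1 else 0) := rfl

lemma endCount_mk (v a b : V) :
    endCount v s(a, b) = (if a = v then 1 else 0) + (if b = v then 1 else 0) := rfl

/-- edges between A and B as a Finset -/
def EB (A B : Set V) : Finset E :=
  Finset.univ.filter (fun e => ∃ a ∈ A, ∃ b ∈ B, G.inc e = s(a, b))

lemma mem_EB {A B : Set V} {e : E} :
    e ∈ EB G A B ↔ ∃ a ∈ A, ∃ b ∈ B, G.inc e = s(a, b) := by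
  simp [EB]

lemma EB_comm (A B : Set V) : EB G A B = EB G B A := by
  ext e
  simp only [mem_EB]
  constructor <;> rintro ⟨a, ha, b, hb, h⟩ <;> exact ⟨b, hb, a, ha, by rw [h, Sym2.eq_swap]⟩

lemma edgesBetween_eq (A B : Set V) :
    G.edgesBetween A B = (EB G A B).card := by
  rw [edgesBetween, Nat.card_eq_fintype_card, Fintype.card_subtype]
  rfl

lemma natCard_set_eq (P : Set V → Prop) :
    Nat.card {C : Set V // P C} = (Finset.univ.filter P).card := by
  rw [Nat.card_eq_fintype_card, Fintype.card_subtype]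

/-- vertex count of a set -/
def vcard (W : Set V) : ℕ := (Finset.univ.filter (· ∈ W)).card

lemma vcongr {p q : V → Prop} {ip : DecidablePred p} {iq : DecidablePred q}
    (h : ∀ v, p v ↔ q v) :
    (@Finset.filter _ p ip Finset.univ).card = (@Finset.filter _ q iq Finset.univ).card := by
  apply congrArg Finset.card
  ext v
  simp only [Finset.mem_filter, Finset.mem_univ, true_and]
  exact h v

lemma vcard_eq_ncard (W : Set V) : vcard (V := V) W = W.ncard := by
  rw [← Nat.card_coe_set_eq, Nat.card_eq_fintype_card]
  unfold vcard
  rw [Fintype.card_subtype]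

lemma vcard_split (W X : Set V) :
    vcard (V := V) W = vcard (W ∩ X) + vcard (W \ X) := by
  unfold vcard
  rw [Finset.card_filter, Finset.card_filter, Finset.card_filter, ← Finset.sum_add_distrib]
  exact Finset.sum_congr rfl fun v _ => by
    by_cases h1 : v ∈ W <;> by_cases h2 : v ∈ X <;> simp [h1, h2, Set.mem_diff]

lemma sum_ite_mem_card (E₀ s : Finset E) :
    (∑ e ∈ E₀, if e ∈ s then 1 else 0) = (E₀ ∩ s).card := by
  rw [← Finset.filter_mem_eq_inter, Finset.card_filter]

lemma sum_const_ite (W : Set V) (c : ℕ) :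
    (∑ v : V, if v ∈ W then c else 0) = c * vcard W := by
  rw [vcard, Finset.card_filter, Finset.mul_sum]
  exact Finset.sum_congr rfl fun v _ => by split <;> simp

lemma endCount_ite (W : Set V) (a b v : V) :
    (if v ∈ W then endCount v s(a,b) else 0)
      = (if a = v then (if v ∈ W then 1 else 0) else 0)
        + (if b = v then (if v ∈ W then 1 else 0) else 0) := by
  by_cases ha : a = v <;> by_cases hb : b = v <;> by_cases hw : v ∈ W <;>
    simp [endCount_mk, ha, hb, hw]

/-- swap lemma: sum over W of E₀-degrees equals sum of cw over E₀ -/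
lemma sum_deg_eq_sum_cw (E₀ : Finset E) (W : Set V) :
    (∑ v : V, if v ∈ W then (∑ e ∈ E₀, endCount v (G.inc e)) else 0)
      = ∑ e ∈ E₀, cw W (G.inc e) := by
  have h1 : ∀ v : V, (if v ∈ W then (∑ e ∈ E₀, endCount v (G.inc e)) else 0)
      = ∑ e ∈ E₀, (if v ∈ W then endCount v (G.inc e) else 0) := by
    intro v; split <;> simp
  rw [Finset.sum_congr rfl fun v _ => h1 v, Finset.sum_comm]
  refine Finset.sum_congr rfl fun e _ => ?_
  induction G.inc e using Sym2.ind with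
  | _ a b =>
    rw [cw_mk]
    rw [Finset.sum_congr rfl fun v _ => endCount_ite W a b v, Finset.sum_add_distrib,
      Finset.sum_ite_eq Finset.univ a, Finset.sum_ite_eq Finset.univ b]
    simp

end NF
namespace NF
open Multigraph Finset

variable {V E : Type} [Fintype V] [Fintype E] {G : Multigraph V E} {R : Set V}

/-! ### components -/

lemma stepIn_symm {x y : V} (h : G.StepIn R x y) : G.StepIn R y x := by
  obtain ⟨hx, hy, e, he⟩ := h
  exact ⟨hy, hx, e, by rw [he, Sym2.eq_swap]⟩

lemma reachIn_symm {x y : V} (h : G.ReachIn R x y) : G.ReachIn R y x :=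
  by haveI : Std.Symm (G.StepIn R) := ⟨fun _ _ hh => stepIn_symm hh⟩
     exact Relation.ReflTransGen.symmetric.symm _ _ h

lemma mem_componentIn_self (v : V) : v ∈ G.componentIn R v :=
  Relation.ReflTransGen.refl

lemma componentIn_subset_R {v : V} (hv : v ∈ R) : G.componentIn R v ⊆ R := by
  intro w hw
  induction hw with
  | refl => exact hv
  | tail _ h2 _ => exact h2.2.1

lemma componentIn_eq {u v : V} (hu : u ∈ G.componentIn R v) :
    G.componentIn R u = G.componentIn R v := by
  ext w
  constructor
  · intro hw; exact Relation.ReflTransGen.trans hu hw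
  · intro hw; exact Relation.ReflTransGen.trans (reachIn_symm hu) hw

lemma compOf_eq {C : Set V} (hC : G.IsCompOf R C) {u : V} (hu : u ∈ C) :
    C = G.componentIn R u := by
  obtain ⟨v, hv, rfl⟩ := hC
  exact (componentIn_eq hu).symm

lemma compOf_subset_R {C : Set V} (hC : G.IsCompOf R C) : C ⊆ R := by
  obtain ⟨v, hv, rfl⟩ := hC
  exact componentIn_subset_R hv

lemma compOf_closed {C : Set V} (hC : G.IsCompOf R C) {a b : V} {e : E}
    (ha : a ∈ C) (hab : G.inc e = s(a, b)) (hb : b ∈ R) : b ∈ C := by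
  obtain ⟨v, hv, rfl⟩ := hC
  exact Relation.ReflTransGen.tail ha ⟨componentIn_subset_R hv ha, hb, e, hab⟩

/-- the finset of components of G[R] -/
def comps (G : Multigraph V E) (R : Set V) : Finset (Set V) :=
  Finset.univ.filter (G.IsCompOf R)

lemma mem_comps {C : Set V} : C ∈ comps G R ↔ G.IsCompOf R C := by simp [comps]

/-! ### the ledger -/

/-- the key pointwise lemma -/
lemma cw_eq_ite {W A B : Set V} (e : E)
    (hWA : Disjoint W A) (hWB : Disjoint W B) (hAB : Disjoint A B)
    (hcl : ∀ a b : V, G.inc e = s(a, b) → a ∈ W → b ∈ W ∨ b ∈ A ∨ b ∈ B) :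
    cw W (G.inc e) = 2 * (if e ∈ EB G W W then 1 else 0)
      + ((if e ∈ EB G W A then 1 else 0) + (if e ∈ EB G W B then 1 else 0)) := by
  obtain ⟨⟨a, b⟩, hab⟩ := (G.inc e).exists_rep
  have hab' : G.inc e = s(a, b) := hab.symm
  have hba' : G.inc e = s(b, a) := by rw [hab', Sym2.eq_swap]
  have memEB : ∀ (A' B' : Set V), e ∈ EB G A' B' ↔
      (a ∈ A' ∧ b ∈ B') ∨ (b ∈ A' ∧ a ∈ B') := by
    intro A' B'
    rw [mem_EB]
    constructor
    · rintro ⟨x, hx, y, hy, hxy⟩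
      rcases Sym2.eq_iff.mp (hab'.symm.trans hxy) with ⟨rfl, rfl⟩ | ⟨rfl, rfl⟩
      · exact Or.inl ⟨hx, hy⟩
      · exact Or.inr ⟨hx, hy⟩
    · rintro (⟨h1, h2⟩ | ⟨h1, h2⟩)
      · exact ⟨a, h1, b, h2, hab'⟩
      · exact ⟨b, h1, a, h2, hba'⟩
  rw [hab', cw_mk]
  by_cases haW : a ∈ W <;> by_cases hbW : b ∈ W
  · have h1 : e ∈ EB G W W := (memEB W W).mpr (Or.inl ⟨haW, hbW⟩)
    have h2 : e ∉ EB G W A := by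
      rw [memEB]; rintro (⟨_, h⟩ | ⟨_, h⟩) <;>
        [exact hWA.ne_of_mem hbW h rfl; exact hWA.ne_of_mem haW h rfl]
    have h3 : e ∉ EB G W B := by
      rw [memEB]; rintro (⟨_, h⟩ | ⟨_, h⟩) <;>
        [exact hWB.ne_of_mem hbW h rfl; exact hWB.ne_of_mem haW h rfl]
    simp [haW, hbW, h1, h2, h3]
  · -- a ∈ W, b ∉ W
    have h1 : e ∉ EB G W W := by
      rw [memEB]; rintro (⟨_, h⟩ | ⟨h, _⟩) <;> exact hbW h
    have hb : b ∈ A ∨ b ∈ B := by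
      rcases hcl a b hab' haW with h | h | h
      · exact absurd h hbW
      · exact Or.inl h
      · exact Or.inr h
    have h2 : e ∈ EB G W A ↔ b ∈ A := by
      rw [memEB]
      constructor
      · rintro (⟨_, h⟩ | ⟨h, _⟩)
        · exact h
        · exact absurd h hbW
      · intro h; exact Or.inl ⟨haW, h⟩
    have h3 : e ∈ EB G W B ↔ b ∈ B := by
      rw [memEB]
      constructor
      · rintro (⟨_, h⟩ | ⟨h, _⟩)
        · exact h
        · exact absurd h hbW
      · intro h; exact Or.inl ⟨haW, h⟩
    rcases hb with h | h
    · have : b ∉ B := fun hh => hAB.ne_of_mem h hh rfl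
      simp [haW, hbW, h1, h2, h3, h, this]
    · have : b ∉ A := fun hh => hAB.ne_of_mem hh h rfl
      simp [haW, hbW, h1, h2, h3, h, this]
  · -- a ∉ W, b ∈ W
    have h1 : e ∉ EB G W W := by
      rw [memEB]; rintro (⟨h, _⟩ | ⟨_, h⟩) <;> exact haW h
    have ha : a ∈ A ∨ a ∈ B := by
      rcases hcl b a hba' hbW with h | h | h
      · exact absurd h haW
      · exact Or.inl h
      · exact Or.inr h
    have h2 : e ∈ EB G W A ↔ a ∈ A := by
      rw [memEB]
      constructor
      · rintro (⟨h, _⟩ | ⟨_, h⟩)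
        · exact absurd h haW
        · exact h
      · intro h; exact Or.inr ⟨hbW, h⟩
    have h3 : e ∈ EB G W B ↔ a ∈ B := by
      rw [memEB]
      constructor
      · rintro (⟨h, _⟩ | ⟨_, h⟩)
        · exact absurd h haW
        · exact h
      · intro h; exact Or.inr ⟨hbW, h⟩
    rcases ha with h | h
    · have : a ∉ B := fun hh => hAB.ne_of_mem h hh rfl
      simp [haW, hbW, h1, h2, h3, h, this]
    · have : a ∉ A := fun hh => hAB.ne_of_mem hh h rfl
      simp [haW, hbW, h1, h2, h3, h, this]
  · have h1 : e ∉ EB G W W := by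
      rw [memEB]; rintro (⟨h, _⟩ | ⟨h, _⟩) <;> [exact haW h; exact hbW h]
    have h2 : e ∉ EB G W A := by
      rw [memEB]; rintro (⟨h, _⟩ | ⟨h, _⟩) <;> [exact haW h; exact hbW h]
    have h3 : e ∉ EB G W B := by
      rw [memEB]; rintro (⟨h, _⟩ | ⟨h, _⟩) <;> [exact haW h; exact hbW h]
    simp [haW, hbW, h1, h2, h3]

/-- the master ledger -/
lemma ledger (E₀ : Finset E) {W A B : Set V}
    (hWA : Disjoint W A) (hWB : Disjoint W B) (hAB : Disjoint A B)
    (hcl : ∀ e : E, ∀ a b : V, G.inc e = s(a, b) → a ∈ W → b ∈ W ∨ b ∈ A ∨ b ∈ B) :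
    (∑ v : V, if v ∈ W then (∑ e ∈ E₀, endCount v (G.inc e)) else 0)
      = 2 * (E₀ ∩ EB G W W).card + ((E₀ ∩ EB G W A).card + (E₀ ∩ EB G W B).card) := by
  rw [sum_deg_eq_sum_cw,
    Finset.sum_congr rfl fun e _ => cw_eq_ite e hWA hWB hAB (hcl e),
    Finset.sum_add_distrib, ← Finset.mul_sum, Finset.sum_add_distrib,
    sum_ite_mem_card, sum_ite_mem_card, sum_ite_mem_card]

end NF
namespace NF
open Multigraph Finset

variable {V E : Type} [Fintype V] [Fintype E] {G : Multigraph V E} {R : Set V}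

/-- decomposition of the edges from `W` to `R` by components of `G[R]` -/
lemma EB_R_decomp (E₀ : Finset E) {W : Set V} (hWR : Disjoint W R) :
    (E₀ ∩ EB G W R).card = ∑ C ∈ comps G R, (E₀ ∩ EB G W C).card := by
  classical
  set f : E → Set V := fun e =>
    if h : ∃ b ∈ R, ∃ a ∈ W, G.inc e = s(a, b) then G.componentIn R h.choose else ∅ with hf
  have hmem : ∀ e ∈ E₀ ∩ EB G W R, f e ∈ comps G R := by
    intro e he
    rw [Finset.mem_inter, mem_EB] at he
    obtain ⟨-, a, ha, b, hb, hab⟩ := he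
    have h : ∃ b ∈ R, ∃ a ∈ W, G.inc e = s(a, b) := ⟨b, hb, a, ha, hab⟩
    rw [mem_comps, hf]
    simp only [dif_pos h]
    exact ⟨h.choose, h.choose_spec.1, rfl⟩
  rw [Finset.card_eq_sum_card_fiberwise hmem]
  refine Finset.sum_congr rfl fun C hC => ?_
  rw [mem_comps] at hC
  congr 1
  ext e
  rw [Finset.mem_filter, Finset.mem_inter, Finset.mem_inter, mem_EB, mem_EB]
  constructor
  · rintro ⟨⟨he0, a, ha, b, hb, hab⟩, hfe⟩
    have h : ∃ b ∈ R, ∃ a ∈ W, G.inc e = s(a, b) := ⟨b, hb, a, ha, hab⟩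
    refine ⟨he0, ?_⟩
    obtain ⟨hbR, a', ha', hab'⟩ := h.choose_spec
    refine ⟨a', ha', h.choose, ?_, hab'⟩
    rw [hf] at hfe
    simp only [dif_pos h] at hfe
    rw [← hfe]
    exact mem_componentIn_self _
  · rintro ⟨he0, a, ha, b, hb, hab⟩
    have hbR : b ∈ R := compOf_subset_R hC hb
    have h : ∃ b ∈ R, ∃ a ∈ W, G.inc e = s(a, b) := ⟨b, hbR, a, ha, hab⟩
    refine ⟨⟨he0, a, ha, b, hbR, hab⟩, ?_⟩
    rw [hf]
    simp only [dif_pos h]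
    obtain ⟨hbR', a', ha', hab'⟩ := h.choose_spec
    -- G.inc e = s(a', h.choose) and = s(a, b); a,a' ∈ W, b, h.choose ∈ R
    have : h.choose = b := by
      rcases Sym2.eq_iff.mp (hab'.symm.trans hab) with ⟨rfl, rfl⟩ | ⟨h1, h2⟩
      · rfl
      · exact ((hWR.ne_of_mem ha (h2 ▸ hbR') : a ≠ a) rfl).elim
    rw [this, ← compOf_eq hC hb]

end NF
namespace NF
open Multigraph Finset

variable {V E : Type} [Fintype V] [Fintype E] {G : Multigraph V E} {R : Set V}

/-! ### cut edges -/

lemma reach_quot {A : Set E} {x y : V} (h : Relation.ReflTransGen (G.Step A) x y) :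
    Quot.mk (G.Step A) x = Quot.mk (G.Step A) y := by
  induction h with
  | refl => rfl
  | tail _ h2 ih => exact ih.trans (Quot.sound h2)

lemma cut_not_reach {e₀ : E} (he : G.IsCutEdge e₀) {x y : V} (hxy : G.inc e₀ = s(x, y))
    (hreach : Relation.ReflTransGen (G.Step {e₀}) x y) : False := by
  have hwd : ∀ p q : V, G.Step ∅ p q →
      Quot.mk (G.Step {e₀}) p = Quot.mk (G.Step {e₀}) q := by
    rintro p q ⟨e, -, hpq⟩
    by_cases h : e = e₀
    · subst h
      rcases Sym2.eq_iff.mp (hxy.symm.trans hpq) with ⟨rfl, rfl⟩ | ⟨rfl, rfl⟩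
      · exact reach_quot hreach
      · exact (reach_quot hreach).symm
    · exact Quot.sound ⟨e, by simp [h], hpq⟩
  have hwd2 : ∀ p q : V, G.Step {e₀} p q →
      Quot.mk (G.Step ∅) p = Quot.mk (G.Step ∅) q := by
    rintro p q ⟨e, -, hpq⟩
    exact Quot.sound ⟨e, Set.notMem_empty e, hpq⟩
  have hbij : Function.Bijective
      (Quot.lift (Quot.mk (G.Step ∅)) hwd2 : Quot (G.Step {e₀}) → Quot (G.Step ∅)) := by
    constructor
    · intro x y hxy'
      induction x using Quot.ind with | _ p => ?_
      induction y using Quot.ind with | _ q => ?_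
      exact congrArg (Quot.lift (Quot.mk (G.Step {e₀})) hwd) hxy'
    · intro x
      induction x using Quot.ind with | _ p => exact ⟨Quot.mk _ p, rfl⟩
  have hcard := Nat.card_eq_of_bijective _ hbij
  have := he
  rw [IsCutEdge, numComponents, numComponents] at this
  omega

/-- the component of `u` in `G − e₀` -/
def Xset (G : Multigraph V E) (e₀ : E) (u : V) : Set V :=
  {w | Relation.ReflTransGen (G.Step {e₀}) u w}

lemma mem_Xset_self (e₀ : E) (u : V) : u ∈ Xset G e₀ u := Relation.ReflTransGen.refl

lemma step_symm {A : Set E} {x y : V} (h : G.Step A x y) : G.Step A y x := by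
  obtain ⟨e, he, hxy⟩ := h
  exact ⟨e, he, by rw [hxy, Sym2.eq_swap]⟩

lemma Xset_closed {e₀ e : E} {u a b : V} (hne : e ≠ e₀) (hab : G.inc e = s(a, b)) :
    (a ∈ Xset G e₀ u ↔ b ∈ Xset G e₀ u) := by
  constructor
  · intro h; exact Relation.ReflTransGen.tail h ⟨e, by simp [hne], hab⟩
  · intro h
    exact Relation.ReflTransGen.tail h (step_symm ⟨e, by simp [hne], hab⟩)

/-- the head of the cut edge is not on the tail side -/
lemma cut_head_not_mem {e₀ : E} (he : G.IsCutEdge e₀) {t₀ u : V}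
    (hxy : G.inc e₀ = s(t₀, u)) : t₀ ∉ Xset G e₀ u := by
  intro hmem
  exact cut_not_reach he (by rw [hxy, Sym2.eq_swap]) hmem

/-- components not meeting a side stay out; meeting ones are contained -/
lemma comp_subset_Xset {e₀ : E} {t₀ u : V} (hxy : G.inc e₀ = s(t₀, u)) (ht₀R : t₀ ∉ R)
    {C : Set V} (hC : G.IsCompOf R C) {w : V} (hw : w ∈ C) (hwX : w ∈ Xset G e₀ u) :
    C ⊆ Xset G e₀ u := by
  intro c hc
  have hreach : G.ReachIn R w c := by
    have := compOf_eq hC hw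
    rw [this] at hc
    exact hc
  have hmono : ∀ p q : V, G.StepIn R p q → G.Step {e₀} p q := by
    rintro p q ⟨hp, hq, e, hpq⟩
    refine ⟨e, ?_, hpq⟩
    intro hee
    rw [Set.mem_singleton_iff] at hee
    subst hee
    rcases Sym2.eq_iff.mp (hxy.symm.trans hpq) with ⟨rfl, rfl⟩ | ⟨rfl, rfl⟩
    · exact ht₀R hp
    · exact ht₀R hq
  exact Relation.ReflTransGen.trans hwX (Relation.ReflTransGen.mono hmono _ _ hreach)

/-- a cut edge is in no even factor -/
lemma cut_notin_factor {F : Finset E} {k : ℕ}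
    (hF : ∀ v : V, ∑ e ∈ F, endCount v (G.inc e) = 2 * k)
    {e₀ : E} (he : G.IsCutEdge e₀) {t₀ u : V} (hxy : G.inc e₀ = s(t₀, u)) : e₀ ∉ F := by
  intro hmem
  set X := Xset G e₀ u with hX
  have hsum : (∑ v : V, if v ∈ X then (∑ e ∈ F, endCount v (G.inc e)) else 0)
      = 2 * k * vcard X := by
    rw [Finset.sum_congr rfl fun v _ => by rw [hF v], sum_const_ite]
  rw [sum_deg_eq_sum_cw, ← Finset.add_sum_erase F _ hmem] at hsum
  have h1 : cw X (G.inc e₀) = 1 := by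
    rw [hxy, cw_mk, if_neg (cut_head_not_mem he hxy), if_pos (mem_Xset_self e₀ u)]
  have h2 : 2 ∣ ∑ e ∈ F.erase e₀, cw X (G.inc e) := by
    refine Finset.dvd_sum fun e hee => ?_
    have hne : e ≠ e₀ := (Finset.mem_erase.mp hee).1
    obtain ⟨⟨a, b⟩, hab⟩ := (G.inc e).exists_rep
    have hab' : G.inc e = s(a, b) := hab.symm
    rw [hab', cw_mk]
    have := Xset_closed (u := u) hne hab'
    by_cases ha : a ∈ X
    · rw [if_pos ha, if_pos (this.mp ha)]
    · rw [if_neg ha, if_neg (fun hb => ha (this.mpr hb))]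
      norm_num
  obtain ⟨c, hc⟩ := h2
  rw [h1, hc, mul_assoc] at hsum
  omega

end NF
namespace NF
open Multigraph Finset

variable {V E : Type} [Fintype V] [Fintype E] {G : Multigraph V E}

/-- The X-side argument: if some component touched by a cut edge, with no edges to S,
has at least 2 edges to T, then |T| ≥ |S| + 2. -/
lemma Xarg {R S T : Set V} {r : ℕ}
    (hreg : ∀ v : V, G.degree v = 2 * r + 1)
    (hcov : ∀ b : V, b ∈ R ∨ b ∈ S ∨ b ∈ T)
    (hRS : Disjoint R S) (hRT : Disjoint R T) (hST : Disjoint S T)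
    (haS : G.IsIndependent S) (haT : G.IsIndependent T)
    (ham : ∀ C ∈ comps G R, (EB G S C).card ≤ (EB G T C).card)
    {Cs : Set V} (hCs : Cs ∈ comps G R)
    {e₀ : E} {t₀ u : V} (he₀ : G.IsCutEdge e₀) (hinc : G.inc e₀ = s(t₀, u))
    (ht₀ : t₀ ∈ T) (hu : u ∈ Cs)
    (haz : (EB G S Cs).card = 0)
    (hm2 : 2 ≤ (EB G T Cs).card) :
    vcard S + 2 ≤ vcard T := by
  classical
  set X := Xset G e₀ u with hXdef
  have huX : u ∈ X := mem_Xset_self e₀ u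
  have ht₀X : t₀ ∉ X := cut_head_not_mem he₀ hinc
  have ht₀R : t₀ ∉ R := fun h => hRT.ne_of_mem h ht₀ rfl
  have huR : u ∈ R := compOf_subset_R (mem_comps.mp hCs) hu
  -- basic: an edge with an S- or T∖{t₀}-endpoint is not e₀; endpoints of e₀
  have hends : ∀ {a b : V}, G.inc e₀ = s(a, b) → (a = t₀ ∧ b = u) ∨ (a = u ∧ b = t₀) :=
    fun hab => Sym2.eq_iff.mp (hab.symm.trans hinc)
  have hSne : ∀ {e : E} {a b : V}, G.inc e = s(a, b) → a ∈ S → e ≠ e₀ := by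
    intro e a b hab ha hee
    subst hee
    rcases hends hab with ⟨rfl, -⟩ | ⟨rfl, -⟩
    · exact hST.ne_of_mem ha ht₀ rfl
    · exact hRS.ne_of_mem huR ha rfl
  have hXiff : ∀ {e : E}, e ≠ e₀ → ∀ {a b : V}, G.inc e = s(a, b) → (a ∈ X ↔ b ∈ X) := by
    intro e hne a b hab
    exact Xset_closed hne hab
  -- dichotomy for components
  have hdich : ∀ C ∈ comps G R, C ⊆ X ∨ ∀ w ∈ C, w ∉ X := by
    intro C hC
    by_cases h : ∃ w ∈ C, w ∈ X
    · obtain ⟨w, hw, hwX⟩ := h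
      exact Or.inl (comp_subset_Xset hinc ht₀R (mem_comps.mp hC) hw hwX)
    · push_neg at h; exact Or.inr h
  have hCsX : Cs ⊆ X := comp_subset_Xset hinc ht₀R (mem_comps.mp hCs) hu huX
  have hCuniq : ∀ C ∈ comps G R, u ∈ C → C = Cs := by
    intro C hC huC
    rw [compOf_eq (mem_comps.mp hC) huC, ← compOf_eq (mem_comps.mp hCs) hu]
  set Ts : Set V := T ∩ X with hTs
  set Ss : Set V := S ∩ X with hSs
  set Ty : Set V := T \ X with hTy
  set Sy : Set V := S \ X with hSy
  -- ledgers
  have hTsS : Ts ⊆ T := Set.inter_subset_left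
  have hSsS : Ss ⊆ S := Set.inter_subset_left
  have hTyS : Ty ⊆ T := Set.diff_subset
  have hSyS : Sy ⊆ S := Set.diff_subset
  have hET : ∀ W : Set V, W ⊆ T → EB G W W = (∅ : Finset E) := by
    intro W hW
    ext e
    simp only [mem_EB, Finset.notMem_empty, iff_false]
    rintro ⟨a, ha, b, hb, hab⟩
    exact haT e a b hab ⟨hW ha, hW hb⟩
  have hES : ∀ W : Set V, W ⊆ S → EB G W W = (∅ : Finset E) := by
    intro W hW
    ext e
    simp only [mem_EB, Finset.notMem_empty, iff_false]
    rintro ⟨a, ha, b, hb, hab⟩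
    exact haS e a b hab ⟨hW ha, hW hb⟩
  have hdegu : ∀ W : Set V, (∑ v : V, if v ∈ W then (∑ e ∈ Finset.univ, endCount v (G.inc e)) else 0)
      = (2 * r + 1) * vcard W := by
    intro W
    rw [Finset.sum_congr rfl fun v _ => by
      rw [show (∑ e ∈ Finset.univ, endCount v (G.inc e)) = G.degree v from rfl, hreg v],
      sum_const_ite]
  have hclT : ∀ (W : Set V), W ⊆ T →
      ∀ e : E, ∀ a b : V, G.inc e = s(a, b) → a ∈ W → b ∈ W ∨ b ∈ S ∨ b ∈ R := by
    intro W hW e a b hab ha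
    rcases hcov b with h | h | h
    · exact Or.inr (Or.inr h)
    · exact Or.inr (Or.inl h)
    · exact absurd ⟨hW ha, h⟩ (haT e a b hab)
  have hclS : ∀ (W : Set V), W ⊆ S →
      ∀ e : E, ∀ a b : V, G.inc e = s(a, b) → a ∈ W → b ∈ W ∨ b ∈ T ∨ b ∈ R := by
    intro W hW e a b hab ha
    rcases hcov b with h | h | h
    · exact Or.inr (Or.inr h)
    · exact absurd ⟨hW ha, h⟩ (haS e a b hab)
    · exact Or.inr (Or.inl h)
  -- the four ledgers (with E₀ = univ)
  have dTsS : Disjoint Ts S := (Set.disjoint_of_subset_left hTsS hST.symm)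
  have dTsR : Disjoint Ts R := (Set.disjoint_of_subset_left hTsS hRT.symm)
  have dSR : Disjoint S R := hRS.symm
  have dSsT : Disjoint Ss T := (Set.disjoint_of_subset_left hSsS hST)
  have dSsR : Disjoint Ss R := (Set.disjoint_of_subset_left hSsS hRS.symm)
  have dTR : Disjoint T R := hRT.symm
  have dTyS : Disjoint Ty S := (Set.disjoint_of_subset_left hTyS hST.symm)
  have dTyR : Disjoint Ty R := (Set.disjoint_of_subset_left hTyS hRT.symm)
  have dSyT : Disjoint Sy T := (Set.disjoint_of_subset_left hSyS hST)
  have dSyR : Disjoint Sy R := (Set.disjoint_of_subset_left hSyS hRS.symm)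
  have LTs := ledger (G := G) Finset.univ dTsS dTsR dSR (hclT Ts hTsS)
  have LSs := ledger (G := G) Finset.univ dSsT dSsR dTR (hclS Ss hSsS)
  have LTy := ledger (G := G) Finset.univ dTyS dTyR dSR (hclT Ty hTyS)
  have LSy := ledger (G := G) Finset.univ dSyT dSyR dTR (hclS Sy hSyS)
  rw [hdegu, hET Ts hTsS] at LTs
  rw [hdegu, hES Ss hSsS] at LSs
  rw [hdegu, hET Ty hTyS] at LTy
  rw [hdegu, hES Sy hSyS] at LSy
  simp only [Finset.inter_empty, Finset.card_empty, mul_zero, zero_add, Finset.univ_inter] at LTs LSs LTy LSy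
  have decTs := EB_R_decomp (G := G) Finset.univ dTsR
  have decSs := EB_R_decomp (G := G) Finset.univ dSsR
  have decTy := EB_R_decomp (G := G) Finset.univ dTyR
  have decSy := EB_R_decomp (G := G) Finset.univ dSyR
  simp only [Finset.univ_inter] at decTs decSs decTy decSy
  rw [decTs] at LTs
  rw [decSs] at LSs
  rw [decTy] at LTy
  rw [decSy] at LSy
  -- cross terms agree
  have hcross1 : EB G Ts S = EB G Ss T := by
    ext e
    simp only [mem_EB]
    constructor
    · rintro ⟨a, ha, b, hb, hab⟩
      have hne : e ≠ e₀ := hSne (by rw [hab, Sym2.eq_swap]) hb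
      have hbX : b ∈ X := (hXiff hne hab).mp ha.2
      exact ⟨b, ⟨hb, hbX⟩, a, ha.1, by rw [hab, Sym2.eq_swap]⟩
    · rintro ⟨a, ha, b, hb, hab⟩
      have hne : e ≠ e₀ := hSne hab ha.1
      have hbX : b ∈ X := (hXiff hne hab).mp ha.2
      exact ⟨b, ⟨hb, hbX⟩, a, ha.1, by rw [hab, Sym2.eq_swap]⟩
  have hcross2 : EB G Ty S = EB G Sy T := by
    ext e
    simp only [mem_EB]
    constructor
    · rintro ⟨a, ha, b, hb, hab⟩
      have hne : e ≠ e₀ := hSne (by rw [hab, Sym2.eq_swap]) hb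
      have hbX : b ∉ X := fun h => ha.2 ((hXiff hne hab).mpr h)
      exact ⟨b, ⟨hb, hbX⟩, a, ha.1, by rw [hab, Sym2.eq_swap]⟩
    · rintro ⟨a, ha, b, hb, hab⟩
      have hne : e ≠ e₀ := hSne hab ha.1
      have hbX : b ∉ X := fun h => ha.2 ((hXiff hne hab).mpr h)
      exact ⟨b, ⟨hb, hbX⟩, a, ha.1, by rw [hab, Sym2.eq_swap]⟩
  -- pointwise comparisons on components, X side
  have hptX : ∀ C ∈ comps G R,
      (EB G Ss C).card + (if C = Cs then 1 else 0) ≤ (EB G Ts C).card := by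
    intro C hC
    rcases hdich C hC with hsub | hout
    · -- C ⊆ X
      have hSsC : EB G Ss C = EB G S C := by
        ext e
        simp only [mem_EB]
        constructor
        · rintro ⟨a, ha, b, hb, hab⟩; exact ⟨a, ha.1, b, hb, hab⟩
        · rintro ⟨a, ha, b, hb, hab⟩
          have hne : e ≠ e₀ := hSne hab ha
          exact ⟨a, ⟨ha, (hXiff hne hab).mpr (hsub hb)⟩, b, hb, hab⟩
      by_cases hCC : C = Cs
      · subst hCC
        have h1 : EB G Ts C = (EB G T C).erase e₀ := by
          ext e
          simp only [mem_EB, Finset.mem_erase]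
          constructor
          · rintro ⟨a, ha, b, hb, hab⟩
            refine ⟨?_, a, ha.1, b, hb, hab⟩
            intro hee
            subst hee
            rcases hends hab with ⟨h1, -⟩ | ⟨h1, -⟩
            · exact ht₀X (h1 ▸ ha.2)
            · exact hRT.ne_of_mem huR (h1 ▸ hTsS ha) rfl
          · rintro ⟨hne, a, ha, b, hb, hab⟩
            exact ⟨a, ⟨ha, (hXiff hne hab).mpr (hsub hb)⟩, b, hb, hab⟩
        have he₀mem : e₀ ∈ EB G T C := (mem_EB _).mpr ⟨t₀, ht₀, u, hu, hinc⟩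
        rw [h1, Finset.card_erase_of_mem he₀mem, hSsC, if_pos rfl, haz]
        omega
      · have h1 : EB G Ts C = EB G T C := by
          ext e
          simp only [mem_EB]
          constructor
          · rintro ⟨a, ha, b, hb, hab⟩; exact ⟨a, ha.1, b, hb, hab⟩
          · rintro ⟨a, ha, b, hb, hab⟩
            have hne : e ≠ e₀ := by
              intro hee
              subst hee
              rcases hends hab with ⟨h1, h2⟩ | ⟨h1, h2⟩
              · exact hCC (hCuniq C hC (h2 ▸ hb))
              · exact (hRT.ne_of_mem (compOf_subset_R (mem_comps.mp hC) hb) ht₀) h2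
            exact ⟨a, ⟨ha, (hXiff hne hab).mpr (hsub hb)⟩, b, hb, hab⟩
        rw [h1, hSsC, if_neg hCC, add_zero]
        exact ham C hC
    · -- C ∩ X = ∅
      have hCC : C ≠ Cs := fun h => hout u (h ▸ hu) huX
      have h0 : EB G Ss C = ∅ := by
        ext e
        simp only [mem_EB, Finset.notMem_empty, iff_false]
        rintro ⟨a, ha, b, hb, hab⟩
        have hne : e ≠ e₀ := hSne hab ha.1
        exact hout b hb ((hXiff hne hab).mp ha.2)
      rw [h0, if_neg hCC]
      simp
  -- pointwise comparisons, Y side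
  have hptY : ∀ C ∈ comps G R,
      (EB G Sy C).card + (if C = Cs then 1 else 0) ≤ (EB G Ty C).card := by
    intro C hC
    rcases hdich C hC with hsub | hout
    · by_cases hCC : C = Cs
      · subst hCC
        have h0 : EB G Sy C = ∅ := by
          ext e
          simp only [mem_EB, Finset.notMem_empty, iff_false]
          rintro ⟨a, ha, b, hb, hab⟩
          have hne : e ≠ e₀ := hSne hab ha.1
          exact ha.2 ((hXiff hne hab).mpr (hsub hb))
        have h1 : e₀ ∈ EB G Ty C := (mem_EB _).mpr ⟨t₀, ⟨ht₀, ht₀X⟩, u, hu, hinc⟩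
        rw [h0, if_pos rfl]
        simp only [Finset.card_empty, zero_add]
        exact Finset.card_pos.mpr ⟨e₀, h1⟩
      · have h0 : EB G Sy C = ∅ := by
          ext e
          simp only [mem_EB, Finset.notMem_empty, iff_false]
          rintro ⟨a, ha, b, hb, hab⟩
          have hne : e ≠ e₀ := hSne hab ha.1
          exact ha.2 ((hXiff hne hab).mpr (hsub hb))
        rw [h0, if_neg hCC]
        simp
    · have hCC : C ≠ Cs := fun h => hout u (h ▸ hu) huX
      have hSyC : EB G Sy C = EB G S C := by
        ext e
        simp only [mem_EB]
        constructor
        · rintro ⟨a, ha, b, hb, hab⟩; exact ⟨a, ha.1, b, hb, hab⟩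
        · rintro ⟨a, ha, b, hb, hab⟩
          have hne : e ≠ e₀ := hSne hab ha
          exact ⟨a, ⟨ha, fun h => hout b hb ((hXiff hne hab).mp h)⟩, b, hb, hab⟩
      have hTyC : EB G Ty C = EB G T C := by
        ext e
        simp only [mem_EB]
        constructor
        · rintro ⟨a, ha, b, hb, hab⟩; exact ⟨a, ha.1, b, hb, hab⟩
        · rintro ⟨a, ha, b, hb, hab⟩
          have hne : e ≠ e₀ := by
            intro hee
            subst hee
            rcases hends hab with ⟨h1, h2⟩ | ⟨h1, h2⟩
            · exact hout u (h2 ▸ hb) huX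
            · exact (hRT.ne_of_mem (compOf_subset_R (mem_comps.mp hC) hb) ht₀) h2
          exact ⟨a, ⟨ha, fun h => hout b hb ((hXiff hne hab).mp h)⟩, b, hb, hab⟩
      rw [hSyC, hTyC, if_neg hCC, add_zero]
      exact ham C hC
  -- sum the pointwise inequalities
  have hsumX : (∑ C ∈ comps G R, (EB G Ss C).card) + 1 ≤ ∑ C ∈ comps G R, (EB G Ts C).card := by
    calc (∑ C ∈ comps G R, (EB G Ss C).card) + 1
        = ∑ C ∈ comps G R, ((EB G Ss C).card + (if C = Cs then 1 else 0)) := by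
          rw [Finset.sum_add_distrib, Finset.sum_ite_eq' (comps G R) Cs (fun _ => 1), if_pos hCs]
      _ ≤ _ := Finset.sum_le_sum hptX
  have hsumY : (∑ C ∈ comps G R, (EB G Sy C).card) + 1 ≤ ∑ C ∈ comps G R, (EB G Ty C).card := by
    calc (∑ C ∈ comps G R, (EB G Sy C).card) + 1
        = ∑ C ∈ comps G R, ((EB G Sy C).card + (if C = Cs then 1 else 0)) := by
          rw [Finset.sum_add_distrib, Finset.sum_ite_eq' (comps G R) Cs (fun _ => 1), if_pos hCs]
      _ ≤ _ := Finset.sum_le_sum hptY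
  -- conclude on each side
  have hX1 : (2 * r + 1) * vcard Ss + 1 ≤ (2 * r + 1) * vcard Ts := by
    rw [LSs, LTs, hcross1]
    omega
  have hY1 : (2 * r + 1) * vcard Sy + 1 ≤ (2 * r + 1) * vcard Ty := by
    rw [LSy, LTy, hcross2]
    omega
  have hvX : vcard Ss + 1 ≤ vcard Ts := by
    by_contra hcon
    push_neg at hcon
    have : vcard Ts ≤ vcard Ss := by omega
    have := Nat.mul_le_mul_left (2 * r + 1) this
    omega
  have hvY : vcard Sy + 1 ≤ vcard Ty := by
    by_contra hcon
    push_neg at hcon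
    have : vcard Ty ≤ vcard Sy := by omega
    have := Nat.mul_le_mul_left (2 * r + 1) this
    omega
  have hTsplit := vcard_split (V := V) T X
  have hSsplit := vcard_split (V := V) S X
  rw [← hTs, ← hTy] at hTsplit
  rw [← hSs, ← hSy] at hSsplit
  omega

end NF
open Multigraph NF Finset in
theorem no_2k_factor_of_structure_aux
    {V E : Type} [Fintype V] [Fintype E] (r k : ℕ) (hk : 0 < k) (hk3 : 3 * k ≤ 2 * r + 1)
    (G : Multigraph V E) (hreg : ∀ v : V, G.degree v = 2 * r + 1)
    (R S T : Set V)
    (hunion : R ∪ S ∪ T = Set.univ)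
    (hRS : Disjoint R S) (hRT : Disjoint R T) (hST : Disjoint S T)
    (haS : G.IsIndependent S) (haT : G.IsIndependent T) (haST : S.ncard < T.ncard)
    (hb1 : ∀ e : E, G.IsCutEdge e → ∃ t ∈ T, ∃ v ∈ R, G.inc e = s(t, v))
    (hc : ∀ e : E, ∀ a b : V, G.inc e = s(a, b) → a ∈ S →
      b ∈ T ∨ (b ∈ R ∧ G.edgesBetween (G.componentIn R b) S = 1 ∧
        G.edgesBetween (G.componentIn R b) T = 1))
    (hd : Nat.card {C : Set V // G.IsCompOf R C ∧ G.edgesBetween C T = 3}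
        = k * (T.ncard - S.ncard) - 1)
    (he : ∀ C : Set V, G.IsCompOf R C →
      (∀ e : E, G.IsCutEdge e → ∀ v ∈ C, v ∉ G.inc e) →
      ¬ (G.edgesBetween C S = 1 ∧ G.edgesBetween C T = 1) →
      G.edgesBetween C T ≠ 3 →
      G.edgesBetween C S = 0 ∧ G.edgesBetween C T = 0 ∧
        (∀ v ∈ C, G.degree v = 2 * r + 1) ∧
        (∀ e : E, (∃ v ∈ C, v ∈ G.inc e) → ¬ G.IsCutEdge e))
    (hf : 3 * k < 2 * r + 1 → T.ncard = S.ncard + 1) :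
    ¬ G.HasFactor (2 * k) := by
  rintro ⟨F, hF⟩
  classical
  -- basic set facts
  have hcov : ∀ b : V, b ∈ R ∨ b ∈ S ∨ b ∈ T := by
    intro b
    have hb : b ∈ R ∪ S ∪ T := by rw [hunion]; exact Set.mem_univ b
    rcases hb with (h | h) | h
    · exact Or.inl h
    · exact Or.inr (Or.inl h)
    · exact Or.inr (Or.inr h)
  have hml : vcard S < vcard T := by
    rw [vcard_eq_ncard, vcard_eq_ncard]; exact haST
  set D : ℕ := vcard (V := V) T - vcard S with hDdef
  have hDT : vcard T = vcard S + D := by omega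
  have hD1 : 1 ≤ D := by omega
  have hkD : 1 ≤ k * D := by
    have := Nat.mul_le_mul hk hD1
    simpa using this
  -- empty inner edge sets
  have hET : EB G T T = (∅ : Finset E) := by
    ext e
    simp only [mem_EB, Finset.notMem_empty, iff_false]
    rintro ⟨a, ha, b, hb, hab⟩
    exact haT e a b hab ⟨ha, hb⟩
  have hES : EB G S S = (∅ : Finset E) := by
    ext e
    simp only [mem_EB, Finset.notMem_empty, iff_false]
    rintro ⟨a, ha, b, hb, hab⟩
    exact haS e a b hab ⟨ha, hb⟩
  -- degree sums
  have hdegu : ∀ W : Set V,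
      (∑ v : V, if v ∈ W then (∑ e ∈ Finset.univ, endCount v (G.inc e)) else 0)
        = (2 * r + 1) * vcard W := by
    intro W
    rw [Finset.sum_congr rfl fun v _ => by
      rw [show (∑ e ∈ Finset.univ, endCount v (G.inc e)) = G.degree v from rfl, hreg v],
      sum_const_ite]
  have hdegF : ∀ W : Set V,
      (∑ v : V, if v ∈ W then (∑ e ∈ F, endCount v (G.inc e)) else 0)
        = 2 * k * vcard W := by
    intro W
    rw [Finset.sum_congr rfl fun v _ => by rw [hF v], sum_const_ite]
  -- closure conditions for T, S
  have hclT : ∀ e : E, ∀ a b : V, G.inc e = s(a, b) → a ∈ T → b ∈ T ∨ b ∈ S ∨ b ∈ R := by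
    intro e a b hab ha
    rcases hcov b with h | h | h
    · exact Or.inr (Or.inr h)
    · exact Or.inr (Or.inl h)
    · exact absurd ⟨ha, h⟩ (haT e a b hab)
  have hclS : ∀ e : E, ∀ a b : V, G.inc e = s(a, b) → a ∈ S → b ∈ S ∨ b ∈ T ∨ b ∈ R := by
    intro e a b hab ha
    rcases hcov b with h | h | h
    · exact Or.inr (Or.inr h)
    · exact absurd ⟨ha, h⟩ (haS e a b hab)
    · exact Or.inr (Or.inl h)
  -- swap helper
  have hswapU : ∀ W : Set V,
      (∑ C ∈ comps G R, (EB G W C).card) = ∑ C ∈ comps G R, (EB G C W).card :=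
    fun W => Finset.sum_congr rfl fun C _ => by rw [EB_comm]
  have hswapF : ∀ W : Set V,
      (∑ C ∈ comps G R, (F ∩ EB G W C).card) = ∑ C ∈ comps G R, (F ∩ EB G C W).card :=
    fun W => Finset.sum_congr rfl fun C _ => by rw [EB_comm]
  -- the four global ledgers
  have LT := ledger (G := G) Finset.univ hST.symm hRT.symm hRS.symm hclT
  have LS := ledger (G := G) Finset.univ hST hRS.symm hRT.symm hclS
  have FT := ledger (G := G) F hST.symm hRT.symm hRS.symm hclT
  have FS := ledger (G := G) F hST hRS.symm hRT.symm hclS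
  rw [hdegu, hET] at LT
  rw [hdegu, hES] at LS
  rw [hdegF, hET] at FT
  rw [hdegF, hES] at FS
  simp only [Finset.inter_empty, Finset.card_empty, mul_zero, zero_add,
    Finset.univ_inter] at LT LS
  simp only [Finset.inter_empty, Finset.card_empty, mul_zero, zero_add] at FT FS
  have decT := EB_R_decomp (G := G) Finset.univ hRT.symm
  have decS := EB_R_decomp (G := G) Finset.univ hRS.symm
  have decFT := EB_R_decomp (G := G) F hRT.symm
  have decFS := EB_R_decomp (G := G) F hRS.symm
  simp only [Finset.univ_inter] at decT decS
  rw [decT, hswapU T] at LT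
  rw [decS, hswapU S] at LS
  rw [decFT, hswapF T] at FT
  rw [decFS, hswapF S] at FS
  rw [EB_comm G S T] at LS FS
  -- per-component facts
  have hcompR : ∀ C ∈ comps G R, C ⊆ R := fun C hC => compOf_subset_R (mem_comps.mp hC)
  have hdCS : ∀ C ∈ comps G R, Disjoint C S :=
    fun C hC => Set.disjoint_of_subset_left (hcompR C hC) hRS
  have hdCT : ∀ C ∈ comps G R, Disjoint C T :=
    fun C hC => Set.disjoint_of_subset_left (hcompR C hC) hRT
  have hclC : ∀ C ∈ comps G R, ∀ e : E, ∀ a b : V,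
      G.inc e = s(a, b) → a ∈ C → b ∈ C ∨ b ∈ S ∨ b ∈ T := by
    intro C hC e a b hab ha
    rcases hcov b with h | h | h
    · exact Or.inl (compOf_closed (mem_comps.mp hC) ha hab h)
    · exact Or.inr (Or.inl h)
    · exact Or.inr (Or.inr h)
  have hpar : ∀ C ∈ comps G R,
      ((F ∩ EB G C S).card + (F ∩ EB G C T).card) % 2 = 0 := by
    intro C hC
    have L := ledger (G := G) F (hdCS C hC) (hdCT C hC) hST (hclC C hC)
    rw [hdegF, mul_assoc] at L
    omega
  have hblister : ∀ C ∈ comps G R, 1 ≤ (EB G C S).card →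
      (EB G C S).card = 1 ∧ (EB G C T).card = 1 := by
    intro C hC h1
    obtain ⟨e, heEB⟩ := Finset.card_pos.mp (show 0 < (EB G C S).card by omega)
    obtain ⟨x, hx, y, hy, hxy⟩ := (mem_EB _).mp heEB
    have hyx : G.inc e = s(y, x) := by rw [hxy, Sym2.eq_swap]
    rcases hc e y x hyx hy with h | ⟨hxR, h1', h2'⟩
    · exact ((hRT.ne_of_mem (hcompR C hC hx) h) rfl).elim
    · have hCx : C = G.componentIn R x := compOf_eq (mem_comps.mp hC) hx
      rw [← hCx, edgesBetween_eq] at h1' h2'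
      exact ⟨h1', h2'⟩
  have ham : ∀ C ∈ comps G R, (EB G C S).card ≤ (EB G C T).card := by
    intro C hC
    by_cases h1 : 1 ≤ (EB G C S).card
    · obtain ⟨e1, e2⟩ := hblister C hC h1; omega
    · omega
  -- normalized cut-edge witness
  have htw : ∀ C ∈ comps G R, (∃ e, G.IsCutEdge e ∧ ∃ v ∈ C, v ∈ G.inc e) →
      ∃ e₀ t₀ u, G.IsCutEdge e₀ ∧ G.inc e₀ = s(t₀, u) ∧ t₀ ∈ T ∧ u ∈ C := by
    rintro C hC ⟨e₀, hcut, v, hvC, hv⟩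
    obtain ⟨t₀, ht₀, w, hwR, hinc⟩ := hb1 e₀ hcut
    refine ⟨e₀, t₀, w, hcut, hinc, ht₀, ?_⟩
    rw [hinc, Sym2.mem_iff] at hv
    rcases hv with rfl | rfl
    · exact ((hRT.ne_of_mem (hcompR C hC hvC) ht₀) rfl).elim
    · exact hvC
  -- the count of 3-edge components
  have hθeq : (comps G R).filter (fun C => (EB G C T).card = 3)
      = Finset.univ.filter (fun C => G.IsCompOf R C ∧ G.edgesBetween C T = 3) := by
    ext C
    simp only [comps, Finset.mem_filter, Finset.mem_univ, true_and, Finset.filter_filter]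
    rw [edgesBetween_eq]
  have hΘ : ((comps G R).filter (fun C => (EB G C T).card = 3)).card = k * D - 1 := by
    have h1 : Nat.card {C : Set V // G.IsCompOf R C ∧ G.edgesBetween C T = 3}
        = ((comps G R).filter (fun C => (EB G C T).card = 3)).card := by
      rw [natCard_set_eq, hθeq]
      apply vcongr
      intro C
      exact Iff.rfl
    rw [← h1, hd, ← vcard_eq_ncard, ← vcard_eq_ncard, ← hDdef]
  have hΘs : (∑ C ∈ comps G R, if (EB G C T).card = 3 then (1 : ℕ) else 0) = k * D - 1 := by
    rw [Finset.card_filter] at hΘ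
    exact hΘ
  -- bound on T-edges of cut-touched components
  have hmle : ∀ C ∈ comps G R, (EB G C S).card = 0 → (EB G C T).card ≠ 3 →
      (∃ e₀ t₀ u, G.IsCutEdge e₀ ∧ G.inc e₀ = s(t₀, u) ∧ t₀ ∈ T ∧ u ∈ C) →
      (EB G C T).card ≤ 2 := by
    rintro C hC ha0 hm3 ⟨e₀, t₀, u, hcut, hinc, ht₀, huC⟩
    rcases Nat.lt_or_ge (3 * k) (2 * r + 1) with hlt | hge
    · -- D = 1 case, use the X-side argument
      have hT1 : vcard T = vcard S + 1 := by
        rw [vcard_eq_ncard, vcard_eq_ncard, hf hlt]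
      by_contra hcon
      push_neg at hcon
      have h2m : 2 ≤ (EB G T C).card := by rw [EB_comm G T C]; omega
      have haz : (EB G S C).card = 0 := by rw [EB_comm G S C]; exact ha0
      have hamS : ∀ C' ∈ comps G R, (EB G S C').card ≤ (EB G T C').card := by
        intro C' hC'
        rw [EB_comm G S C', EB_comm G T C']
        exact ham C' hC'
      have := Xarg hreg hcov hRS hRT hST haS haT hamS hC hcut hinc ht₀ huC haz h2m
      omega
    · -- 3k = 2r+1 case, use the global identity
      have heq : 3 * k = 2 * r + 1 := le_antisymm hk3 hge
      have hpt : ∀ C' ∈ comps G R,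
          (EB G C' S).card + (3 * (if (EB G C' T).card = 3 then 1 else 0)
            + (if C' = C then (EB G C T).card else 0)) ≤ (EB G C' T).card := by
        intro C' hC'
        by_cases hCC : C' = C
        · subst hCC
          rw [if_pos rfl, if_neg hm3, ha0]
          omega
        · rw [if_neg hCC]
          by_cases h3 : (EB G C' T).card = 3
          · rw [if_pos h3, h3]
            have hss : (EB G C' S).card = 0 := by
              by_contra hzz
              obtain ⟨q1, q2⟩ := hblister C' hC' (by omega)
              omega
            omega
          · rw [if_neg h3]
            have := ham C' hC'
            omega
      have hsum := Finset.sum_le_sum hpt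
      rw [Finset.sum_add_distrib, Finset.sum_add_distrib, ← Finset.mul_sum,
        Finset.sum_ite_eq' (comps G R) C (fun _ => (EB G C T).card), if_pos hC] at hsum
      have hmulD : (2 * r + 1) * D = 3 * (k * D) := by
        rw [← heq, Nat.mul_assoc]
      have hmul : (2 * r + 1) * vcard T = (2 * r + 1) * vcard S + 3 * (k * D) := by
        rw [hDT, Nat.mul_add, hmulD]
      set P1 := (2 * r + 1) * vcard T with hP1
      set P2 := (2 * r + 1) * vcard S with hP2
      set KD := k * D with hKD
      omega
  -- the final per-component bound on factor edges
  have hzb : ∀ C ∈ comps G R, (F ∩ EB G C T).card ≤ (F ∩ EB G C S).card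
      + 2 * (if (EB G C T).card = 3 then 1 else 0) := by
    intro C hC
    have hzS : (F ∩ EB G C S).card ≤ (EB G C S).card :=
      Finset.card_le_card Finset.inter_subset_right
    have hzT : (F ∩ EB G C T).card ≤ (EB G C T).card :=
      Finset.card_le_card Finset.inter_subset_right
    have hparC := hpar C hC
    by_cases h3 : (EB G C T).card = 3
    · rw [if_pos h3]
      have ha0 : (EB G C S).card = 0 := by
        by_contra hzz
        obtain ⟨q1, q2⟩ := hblister C hC (by omega)
        omega
      omega
    · rw [if_neg h3]
      by_cases hb' : 1 ≤ (EB G C S).card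
      · obtain ⟨q1, q2⟩ := hblister C hC hb'
        omega
      · have ha0 : (EB G C S).card = 0 := by omega
        by_cases htouch : ∃ e, G.IsCutEdge e ∧ ∃ v ∈ C, v ∈ G.inc e
        · obtain ⟨e₀, t₀, u, hcut, hinc, ht₀, huC⟩ := htw C hC htouch
          have hnotF : e₀ ∉ F := cut_notin_factor hF hcut hinc
          have hm2 := hmle C hC ha0 h3 ⟨e₀, t₀, u, hcut, hinc, ht₀, huC⟩
          have he₀T : e₀ ∈ EB G C T :=
            (mem_EB _).mpr ⟨u, huC, t₀, ht₀, by rw [hinc, Sym2.eq_swap]⟩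
          have hsub : F ∩ EB G C T ⊆ (EB G C T).erase e₀ := by
            intro e he'
            rw [Finset.mem_inter] at he'
            rw [Finset.mem_erase]
            exact ⟨fun h => hnotF (h ▸ he'.1), he'.2⟩
          have hle := Finset.card_le_card hsub
          rw [Finset.card_erase_of_mem he₀T] at hle
          omega
        · push_neg at htouch
          have hhe := he C (mem_comps.mp hC) htouch
            (fun hblis => by
              rw [edgesBetween_eq] at hblis
              omega)
            (by rw [edgesBetween_eq]; exact h3)
          obtain ⟨-, hT0, -, -⟩ := hhe
          rw [edgesBetween_eq] at hT0
          omega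
  -- sum up and conclude
  have hsumz := Finset.sum_le_sum hzb
  rw [Finset.sum_add_distrib, ← Finset.mul_sum] at hsumz
  have h2kT : 2 * k * vcard T = 2 * (k * vcard S) + 2 * (k * D) := by
    rw [hDT]; ring
  have h2kS : 2 * k * vcard S = 2 * (k * vcard S) := by ring
  rw [h2kT] at FT
  rw [h2kS] at FS
  set KD := k * D with hKD
  set KS := k * vcard S with hKS
  omega

open Multigraph in
/-- Sufficiency in the characterization of extremal graphs: if `k ≤ (2r+1)/3` and a
`(2r+1)`-regular multigraph `G` has a partition `R, S, T` of its vertex set satisfying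
conditions (a)–(f), then `G` has no `2k`-factor. -/
theorem no_2k_factor_of_structure
    {V E : Type} [Fintype V] [Fintype E] (r k : ℕ) (hk : 0 < k) (hk3 : 3 * k ≤ 2 * r + 1)
    (G : Multigraph V E) (hreg : ∀ v : V, G.degree v = 2 * r + 1)
    (R S T : Set V)
    (hunion : R ∪ S ∪ T = Set.univ)
    (hRS : Disjoint R S) (hRT : Disjoint R T) (hST : Disjoint S T)
    -- (a) S and T are independent sets with |T| > |S|
    (haS : G.IsIndependent S) (haT : G.IsIndependent T) (haST : S.ncard < T.ncard)
    -- (b) every cut-edge joins T to a distinct component of G[R]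
    (hb1 : ∀ e : E, G.IsCutEdge e → ∃ t ∈ T, ∃ v ∈ R, G.inc e = s(t, v))
    (hb2 : ∀ e₁ e₂ : E, G.IsCutEdge e₁ → G.IsCutEdge e₂ → e₁ ≠ e₂ →
      ∀ v₁ v₂ : V, v₁ ∈ R → v₂ ∈ R → v₁ ∈ G.inc e₁ → v₂ ∈ G.inc e₂ →
        ¬ G.ReachIn R v₁ v₂)
    -- (c) every edge at S goes to T, or to a component of G[R] joined to S by exactly
    -- one edge and to T by exactly one edge (a blister)
    (hc : ∀ e : E, ∀ a b : V, G.inc e = s(a, b) → a ∈ S →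
      b ∈ T ∨ (b ∈ R ∧ G.edgesBetween (G.componentIn R b) S = 1 ∧
        G.edgesBetween (G.componentIn R b) T = 1))
    -- (d) exactly k(|T|−|S|)−1 components of G[R] are joined to T by exactly three edges
    (hd : Nat.card {C : Set V // G.IsCompOf R C ∧ G.edgesBetween C T = 3}
        = k * (T.ncard - S.ncard) - 1)
    -- (e) every remaining component of G[R] is (2r+1)-regular, has no cut-edge, and has
    -- no edges to S or T
    (he : ∀ C : Set V, G.IsCompOf R C →
      (∀ e : E, G.IsCutEdge e → ∀ v ∈ C, v ∉ G.inc e) →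
      ¬ (G.edgesBetween C S = 1 ∧ G.edgesBetween C T = 1) →
      G.edgesBetween C T ≠ 3 →
      G.edgesBetween C S = 0 ∧ G.edgesBetween C T = 0 ∧
        (∀ v ∈ C, G.degree v = 2 * r + 1) ∧
        (∀ e : E, (∃ v ∈ C, v ∈ G.inc e) → ¬ G.IsCutEdge e))
    -- (f) if k < (2r+1)/3 then |T| − |S| = 1
    (hf : 3 * k < 2 * r + 1 → T.ncard = S.ncard + 1) :
    ¬ G.HasFactor (2 * k) :=
  no_2k_factor_of_structure_aux r k hk hk3 G hreg R S T hunion hRS hRT hST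
    haS haT haST hb1 hc hd he hf
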